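/- Let I ⊆ ℝ be an open interval with 0 ∉ I, let u : ℝ → ℝ be twice differentiable on I with u′(x) ≠ 0 for all x ∈ I, let Ψ₁, Ψ₂ : ℝ → ℝ be twice differentiable with Ψᵢ″(y) = (1/2)·y·Ψᵢ(y) for all y ∈ ℝ (i = 1,2), and let c₁, c₂ ∈ ℝ. Assume that for all x ∈ I: (i) u″(x)·(Ψ₁(u(x)) − c₁·Ψ₂(u(x))) = 2·u′(x)²·(Ψ₁′(u(x)) − c₁·Ψ₂′(u(x))); (ii) (x·u″(x) + 2·u′(x))·(Ψ₁(u(x)) − c₂·Ψ₂(u(x))) = 2·x·u′(x)²·(Ψ₁′(u(x)) − c₂·Ψ₂′(u(x))); and (iii) Ψ₁(u(x)) − c₂·Ψ₂(u(x)) ≠ 0. Then the function Φ(x) := x·(Ψ₁(u(x)) − c₁·Ψ₂(u(x)))/(Ψ₁(u(x)) − c₂·Ψ₂(u(x))) has derivative zero at every x ∈ I. (This is the content of the third first integral Θ₃ in (6.11) and of the general solution formula (6.13) of the paper: on the level sets I₁ = c₁, I₂ = c₂, the quantity x(Ψ₁(u)−c₁Ψ₂(u))/(Ψ₁(u)−c₂Ψ₂(u))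 is constant.) -/

import Mathlib

/-- The quantity `x(Ψ₁(u)−c₁Ψ₂(u))/(Ψ₁(u)−c₂Ψ₂(u))` is constant on the level sets
`I₁ = c₁`, `I₂ = c₂` (the third first integral `Θ₃` of (6.11) and formula (6.13)). -/
theorem theta3_first_integral_exampleI (a b c₁ c₂ : ℝ) (u Ψ₁ Ψ₂ : ℝ → ℝ)
    (h0 : (0 : ℝ) ∉ Set.Ioo a b)
    (hu1 : ∀ x ∈ Set.Ioo a b, DifferentiableAt ℝ u x)
    (hu2 : ∀ x ∈ Set.Ioo a b, DifferentiableAt ℝ (deriv u) x)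
    (hu' : ∀ x ∈ Set.Ioo a b, deriv u x ≠ 0)
    (hΨ₁1 : ∀ y : ℝ, DifferentiableAt ℝ Ψ₁ y)
    (hΨ₁2 : ∀ y : ℝ, DifferentiableAt ℝ (deriv Ψ₁) y)
    (hairy₁ : ∀ y : ℝ, deriv (deriv Ψ₁) y = (1 / 2) * y * Ψ₁ y)
    (hΨ₂1 : ∀ y : ℝ, DifferentiableAt ℝ Ψ₂ y)
    (hΨ₂2 : ∀ y : ℝ, DifferentiableAt ℝ (deriv Ψ₂) y)
    (hairy₂ : ∀ y : ℝ, deriv (deriv Ψ₂) y = (1 / 2) * y * Ψ₂ y)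
    (hi : ∀ x ∈ Set.Ioo a b,
      deriv (deriv u) x * (Ψ₁ (u x) - c₁ * Ψ₂ (u x))
        = 2 * (deriv u x) ^ 2 * (deriv Ψ₁ (u x) - c₁ * deriv Ψ₂ (u x)))
    (hii : ∀ x ∈ Set.Ioo a b,
      (x * deriv (deriv u) x + 2 * deriv u x) * (Ψ₁ (u x) - c₂ * Ψ₂ (u x))
        = 2 * x * (deriv u x) ^ 2 * (deriv Ψ₁ (u x) - c₂ * deriv Ψ₂ (u x)))
    (hiii : ∀ x ∈ Set.Ioo a b, Ψ₁ (u x) - c₂ * Ψ₂ (u x) ≠ 0) :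
    ∀ x ∈ Set.Ioo a b,
      deriv (fun x =>
        x * (Ψ₁ (u x) - c₁ * Ψ₂ (u x)) / (Ψ₁ (u x) - c₂ * Ψ₂ (u x))) x = 0 := by
  intro x hx
  have hux : HasDerivAt u (deriv u x) x := (hu1 x hx).hasDerivAt
  have hΨ₁u : HasDerivAt (fun x => Ψ₁ (u x)) (deriv Ψ₁ (u x) * deriv u x) x :=
    (hΨ₁1 (u x)).hasDerivAt.comp x hux
  have hΨ₂u : HasDerivAt (fun x => Ψ₂ (u x)) (deriv Ψ₂ (u x) * deriv u x) x :=
    (hΨ₂1 (u x)).hasDerivAt.comp x hux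
  have hA : HasDerivAt (fun x => Ψ₁ (u x) - c₁ * Ψ₂ (u x))
      (deriv Ψ₁ (u x) * deriv u x - c₁ * (deriv Ψ₂ (u x) * deriv u x)) x :=
    hΨ₁u.sub (hΨ₂u.const_mul c₁)
  have hD : HasDerivAt (fun x => Ψ₁ (u x) - c₂ * Ψ₂ (u x))
      (deriv Ψ₁ (u x) * deriv u x - c₂ * (deriv Ψ₂ (u x) * deriv u x)) x :=
    hΨ₁u.sub (hΨ₂u.const_mul c₂)
  have hN : HasDerivAt (fun x => x * (Ψ₁ (u x) - c₁ * Ψ₂ (u x)))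
      (1 * (Ψ₁ (u x) - c₁ * Ψ₂ (u x)) +
        x * (deriv Ψ₁ (u x) * deriv u x - c₁ * (deriv Ψ₂ (u x) * deriv u x))) x :=
    (hasDerivAt_id x).mul hA
  have hQ : HasDerivAt (fun x =>
      x * (Ψ₁ (u x) - c₁ * Ψ₂ (u x)) / (Ψ₁ (u x) - c₂ * Ψ₂ (u x))) _ x :=
    hN.div hD (hiii x hx)
  rw [hQ.deriv, div_eq_zero_iff]
  left
  have h1 := hi x hx
  have h2 := hii x hx
  have hu'x := hu' x hx
  have key : deriv u x *
      ((1 * (Ψ₁ (u x) - c₁ * Ψ₂ (u x)) +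
        x * (deriv Ψ₁ (u x) * deriv u x - c₁ * (deriv Ψ₂ (u x) * deriv u x))) *
          (Ψ₁ (u x) - c₂ * Ψ₂ (u x)) -
        x * (Ψ₁ (u x) - c₁ * Ψ₂ (u x)) *
          (deriv Ψ₁ (u x) * deriv u x - c₂ * (deriv Ψ₂ (u x) * deriv u x))) = 0 := by
    linear_combination -(x * (Ψ₁ (u x) - c₂ * Ψ₂ (u x)) / 2) * h1
      + ((Ψ₁ (u x) - c₁ * Ψ₂ (u x)) / 2) * h2
  rcases mul_eq_zero.mp key with h | h
  · exact absurd h hu'x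
  · linarith [h]
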